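/- Let (D,d) be a noncomplete rectifiably connected metric space with quasihyperbolic metric k. For any rectifiable curve γ in D with endpoints x and y, the quasihyperbolic length satisfies ℓ_k(γ) ≥ log(1 + ℓ(γ)/min{d(x),d(y)}), where d(z) denotes the distance from z to the boundary ∂D and ℓ(γ) is the arclength of γ. -/

import Mathlib

open Set Metric ENNReal

noncomputable section

variable {X : Type*} [MetricSpace X] {Y : Type*} [MetricSpace Y]

/-- Distance from a point `z` to the boundary of `D`, modeled as the distance
to the complement of `D`. -/
def bdist (D : Set X) (z : X) : ℝ := Metric.infDist z Dᶜ

/-- Distance from a set `A` to the boundary of `D`. -/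
def setBdist (D A : Set X) : ℝ := sInf (bdist D '' A)

/-- Quasihyperbolic length (variation) of `f` over the parameter set `s`, the
discretized version of `∫_γ |dz| / dist(z, ∂D)`. -/
def qhVariationOn (D : Set X) (f : ℝ → X) (s : Set ℝ) : ℝ≥0∞ :=
  ⨆ p : ℕ × { u : ℕ → ℝ // Monotone u ∧ ∀ i, u i ∈ s },
    ∑ i ∈ Finset.range p.1,
      edist (f (p.2.1 (i + 1))) (f (p.2.1 i)) /
        max (ENNReal.ofReal (bdist D (f (p.2.1 i))))
            (ENNReal.ofReal (bdist D (f (p.2.1 (i + 1)))))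

/-- `f : [0,1] → D` is a curve in `D` from `x` to `y`. -/
structure IsCurveIn (D : Set X) (f : ℝ → X) (x y : X) : Prop where
  cont : ContinuousOn f (Icc 0 1)
  mem : ∀ t ∈ Icc (0 : ℝ) 1, f t ∈ D
  source : f 0 = x
  target : f 1 = y

/-- Every pair of points of `D` can be joined by a rectifiable curve in `D`. -/
def RectifiablyConnected (D : Set X) : Prop :=
  ∀ x ∈ D, ∀ y ∈ D, ∃ f : ℝ → X, IsCurveIn D f x y ∧ eVariationOn f (Icc 0 1) < ⊤

/-- The quasihyperbolic distance in `D`. -/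
def qhDist (D : Set X) (x y : X) : ℝ≥0∞ :=
  ⨅ (f : ℝ → X) (_ : IsCurveIn D f x y ∧ eVariationOn f (Icc 0 1) < ⊤),
    qhVariationOn D f (Icc 0 1)

/-- Diameter of a set `A ⊆ D` with respect to the quasihyperbolic metric of `D`. -/
def qhDiam (D : Set X) (A : Set X) : ℝ≥0∞ := ⨆ x ∈ A, ⨆ y ∈ A, qhDist D x y

/-- `D` is a length `a`-John space with center `x₀`: every point can be joined to `x₀`
by an `a`-carrot arc, i.e. `ℓ(α[x,z]) ≤ a · dist(z, ∂D)` for every `z` on the arc. -/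
def IsLengthJohn (D : Set X) (a : ℝ) (x₀ : X) : Prop :=
  ∀ x ∈ D, ∃ f : ℝ → X, IsCurveIn D f x x₀ ∧
    ∀ t ∈ Icc (0 : ℝ) 1, eVariationOn f (Icc 0 t) ≤ ENNReal.ofReal (a * bdist D (f t))

/-- `D` is locally `(lam, c)`-quasiconvex: any two points of `B(x, lam·dist(x,∂D))`
can be joined by a `c`-quasiconvex curve in `D`. -/
def LocQuasiconvex (D : Set X) (lam c : ℝ) : Prop :=
  ∀ x ∈ D, ∀ y ∈ D, ∀ z ∈ D,
    dist y x < lam * bdist D x → dist z x < lam * bdist D x →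
      ∃ f : ℝ → X, IsCurveIn D f y z ∧
        eVariationOn f (Icc 0 1) ≤ ENNReal.ofReal (c * dist y z)

/-- `η` is a quasisymmetry control function: an increasing self-homeomorphism of `[0, ∞)`. -/
structure QSControl (η : ℝ → ℝ) : Prop where
  mono : StrictMonoOn η (Ici 0)
  cont : ContinuousOn η (Ici 0)
  zero : η 0 = 0
  surj : ∀ s : ℝ, 0 ≤ s → ∃ t : ℝ, 0 ≤ t ∧ η t = s

/-- `f` is `η`-quasisymmetric on `D`. -/
def IsQSOn (f : X → Y) (D : Set X) (η : ℝ → ℝ) : Prop :=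
  ∀ x ∈ D, ∀ a ∈ D, ∀ b ∈ D, ∀ t : ℝ, 0 ≤ t →
    dist x a ≤ t * dist x b → dist (f x) (f a) ≤ η t * dist (f x) (f b)

/-- `f` is a homeomorphism from `D` onto `D'` with inverse `g`. -/
def IsHomeoOn (f : X → Y) (g : Y → X) (D : Set X) (D' : Set Y) : Prop :=
  ContinuousOn f D ∧ ContinuousOn g D' ∧ MapsTo f D D' ∧ MapsTo g D' D ∧ InvOn g f D D'

end

section MyAux

lemma log_chain (d m : ℝ) (hd : 0 < d) (hm : 0 ≤ m) (e : ℕ → ℝ)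
    (he : ∀ i, 0 ≤ e i) (hem : ∀ i, e i ≤ m) (n : ℕ) :
    Real.log (1 + (∑ i ∈ Finset.range n, e i) / (d + m)) ≤
      ∑ i ∈ Finset.range n, e i / (d + ∑ j ∈ Finset.range (i + 1), e j) := by
  have hs : ∀ k, 0 ≤ ∑ j ∈ Finset.range k, e j := fun k => Finset.sum_nonneg fun j _ => he j
  have hrw : ∀ s : ℝ, 0 ≤ s →
      Real.log (1 + s / (d + m)) = Real.log (d + m + s) - Real.log (d + m) := by
    intro s hs0
    rw [show (1 : ℝ) + s / (d + m) = (d + m + s) / (d + m) by field_simp,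
      Real.log_div (by linarith) (by linarith)]
  induction n with
  | zero => simp
  | succ n ih =>
    rw [Finset.sum_range_succ (f := fun i => e i / (d + ∑ j ∈ Finset.range (i + 1), e j)),
      Finset.sum_range_succ (f := e)]
    have hsn := hs n
    have hen := he n
    have hemn := hem n
    rw [hrw _ (by linarith)]
    rw [hrw _ (hs n)] at ih
    have key : Real.log (d + m + (∑ i ∈ Finset.range n, e i + e n))
        - Real.log (d + m + ∑ i ∈ Finset.range n, e i)
        ≤ e n / (d + (∑ i ∈ Finset.range n, e i + e n)) := by
      have h1 : 0 < d + m + ∑ i ∈ Finset.range n, e i := by linarith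
      have h2 := Real.log_le_sub_one_of_pos
        (x := (d + m + (∑ i ∈ Finset.range n, e i + e n)) /
          (d + m + ∑ i ∈ Finset.range n, e i)) (div_pos (by linarith) (by linarith))
      rw [Real.log_div (by linarith) (by linarith)] at h2
      have h3 : (d + m + (∑ i ∈ Finset.range n, e i + e n)) /
            (d + m + ∑ i ∈ Finset.range n, e i) - 1
          = e n / (d + m + ∑ i ∈ Finset.range n, e i) := by field_simp; ring
      rw [h3] at h2
      refine h2.trans (div_le_div_of_nonneg_left hen (by linarith) (by linarith))
    linarith

lemma bdist_chain {X : Type*} [MetricSpace X] (D : Set X) (g : ℕ → X) (j : ℕ) :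
    bdist D (g j) ≤ bdist D (g 0) + ∑ i ∈ Finset.range j, dist (g (i + 1)) (g i) := by
  induction j with
  | zero => simp
  | succ j ih =>
    rw [Finset.sum_range_succ]
    have h : bdist D (g (j + 1)) ≤ bdist D (g j) + dist (g (j + 1)) (g j) :=
      Metric.infDist_le_infDist_add_dist
    linarith

lemma sum_blocks {A : Type*} [AddCommMonoid A] (g : ℕ → A) (M b : ℕ) :
    ∑ k ∈ Finset.range (b * M), g k
      = ∑ q ∈ Finset.range b, ∑ k ∈ Finset.Ico (q * M) ((q + 1) * M), g k := by
  induction b with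
  | zero => simp
  | succ b ih =>
    rw [Finset.sum_range_succ, ← ih, Finset.range_eq_Ico, Finset.range_eq_Ico]
    exact (Finset.sum_Ico_consecutive g (Nat.zero_le _) (Nat.mul_le_mul_right M (Nat.le_succ b))).symm

lemma succ_divmod {M : ℕ} (hM : 0 < M) (k : ℕ) :
    ((k + 1) / M = k / M ∧ (k + 1) % M = k % M + 1) ∨
    (k % M + 1 = M ∧ (k + 1) / M = k / M + 1 ∧ (k + 1) % M = 0) := by
  have h2 : k % M < M := Nat.mod_lt _ hM
  have h1 := Nat.div_add_mod k M
  rcases Nat.lt_or_ge (k % M + 1) M with h | h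
  · left
    have hk : k + 1 = M * (k / M) + (k % M + 1) := by omega
    constructor
    · rw [hk, Nat.mul_add_div hM, Nat.div_eq_of_lt h, Nat.add_zero]
    · rw [hk, Nat.mul_add_mod, Nat.mod_eq_of_lt h]
  · right
    have hM' : k % M + 1 = M := by omega
    have hk : k + 1 = M * (k / M + 1) := by rw [Nat.mul_succ]; omega
    refine ⟨hM', ?_, ?_⟩
    · rw [hk, Nat.mul_div_cancel_left _ hM]
    · rw [hk, Nat.mul_mod_right]


lemma qhVariationOn_def {X : Type*} [MetricSpace X] (D : Set X) (f : ℝ → X) (s : Set ℝ) :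
    qhVariationOn D f s =
      ⨆ p : ℕ × { u : ℕ → ℝ // Monotone u ∧ ∀ i, u i ∈ s },
        ∑ i ∈ Finset.range p.1,
          edist (f (p.2.1 (i + 1))) (f (p.2.1 i)) /
            max (ENNReal.ofReal (bdist D (f (p.2.1 i))))
                (ENNReal.ofReal (bdist D (f (p.2.1 (i + 1))))) := rfl

lemma aux_key {X : Type*} [MetricSpace X] (D : Set X) (f : ℝ → X) (x : X)
    (hc : ContinuousOn f (Icc 0 1)) (h0 : f 0 = x) (hd : 0 < bdist D x)
    {δ : ℝ} (hδ : 0 < δ) :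
    ENNReal.ofReal (Real.log (1 + ((eVariationOn f (Icc 0 1)).toReal - δ) / (bdist D x + δ)))
      ≤ qhVariationOn D f (Icc 0 1) := by
  set d := bdist D x with hd_def
  set V := (eVariationOn f (Icc 0 1)).toReal with hV_def
  have hV0 : 0 ≤ V := ENNReal.toReal_nonneg
  -- Step 1: a partition starting at 0 whose length sum is at least V - δ
  obtain ⟨n, u, hu, hus, h00, hS⟩ :
      ∃ (n : ℕ) (u : ℕ → ℝ), Monotone u ∧ (∀ i, u i ∈ Icc (0:ℝ) 1) ∧ u 0 = 0 ∧
        V - δ ≤ ∑ i ∈ Finset.range n, dist (f (u (i + 1))) (f (u i)) := by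
    rcases le_or_gt (V - δ) 0 with h | h
    · exact ⟨0, fun _ => 0, monotone_const, fun _ => ⟨le_refl 0, zero_le_one⟩, rfl, by simpa using h⟩
    · have hVne : eVariationOn f (Icc 0 1) ≠ ⊤ := by
        intro ht
        rw [hV_def, ht] at h
        simp at h
        linarith
      have hlt : ENNReal.ofReal (V - δ) < eVariationOn f (Icc 0 1) := by
        have h1 : ENNReal.ofReal (V - δ) < ENNReal.ofReal V :=
          (ENNReal.ofReal_lt_ofReal_iff (by linarith)).mpr (by linarith)
        have h2 : ENNReal.ofReal V = eVariationOn f (Icc 0 1) := by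
          rw [hV_def, ENNReal.ofReal_toReal hVne]
        rwa [h2] at h1
      have hlt2 : ENNReal.ofReal (V - δ) <
          ⨆ p : ℕ × { w : ℕ → ℝ // Monotone w ∧ ∀ i, w i ∈ Icc (0:ℝ) 1 },
            ∑ i ∈ Finset.range p.1, edist (f (p.2.1 (i + 1))) (f (p.2.1 i)) := hlt
      obtain ⟨⟨n, u, hu, hus⟩, hlt3⟩ := lt_iSup_iff.mp hlt2
      simp only at hlt3
      have hsum : ∑ i ∈ Finset.range n, edist (f (u (i + 1))) (f (u i))
          = ENNReal.ofReal (∑ i ∈ Finset.range n, dist (f (u (i + 1))) (f (u i))) := by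
        rw [ENNReal.ofReal_sum_of_nonneg (fun i _ => dist_nonneg)]
        exact Finset.sum_congr rfl fun i _ => edist_dist _ _
      rw [hsum] at hlt3
      have hS0 : V - δ ≤ ∑ i ∈ Finset.range n, dist (f (u (i + 1))) (f (u i)) := by
        by_contra hcon
        push_neg at hcon
        exact absurd (ENNReal.ofReal_le_ofReal hcon.le) (not_le.mpr hlt3)
      refine ⟨n + 1, fun i => if i = 0 then 0 else u (i - 1), ?_, ?_, rfl, ?_⟩
      · intro i j hij
        dsimp only
        rcases Nat.eq_zero_or_pos i with rfl | hi
        · rw [if_pos rfl]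
          rcases Nat.eq_zero_or_pos j with rfl | hj
          · rw [if_pos rfl]
          · rw [if_neg (by omega)]
            exact (hus _).1
        · rw [if_neg (by omega : ¬ i = 0), if_neg (by omega : ¬ j = 0)]
          exact hu (by omega)
      · intro i
        dsimp only
        split
        · exact ⟨le_refl 0, zero_le_one⟩
        · exact hus _
      · rw [Finset.sum_range_succ']
        have e2 : ∀ i, dist (f (if i + 1 + 1 = 0 then (0:ℝ) else u (i + 1 + 1 - 1)))
            (f (if i + 1 = 0 then (0:ℝ) else u (i + 1 - 1))) = dist (f (u (i + 1))) (f (u i)) := by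
          intro i; norm_num
        simp only [e2]
        exact hS0.trans (le_add_of_nonneg_right dist_nonneg)
  -- Step 2: uniform continuity
  have huc := (isCompact_Icc (a := (0:ℝ)) (b := 1)).uniformContinuousOn_of_continuous hc
  rw [Metric.uniformContinuousOn_iff] at huc
  obtain ⟨δ₀, hδ₀, hmod⟩ := huc δ hδ
  obtain ⟨N, hN⟩ := exists_nat_gt (1 / δ₀)
  set M := N + 1 with hM_def
  have hM : 0 < M := Nat.succ_pos N
  have hMR : (0:ℝ) < M := by exact_mod_cast hM
  have hmesh : 1 / (M:ℝ) < δ₀ := by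
    rw [div_lt_iff₀ hMR]
    rw [div_lt_iff₀ hδ₀] at hN
    have hNM : (N:ℝ) ≤ M := by rw [hM_def]; push_cast; linarith
    nlinarith
  -- Step 3: refined partition
  set v : ℕ → ℝ := fun k => u (k / M) + ((k % M : ℕ) : ℝ) / M * (u (k / M + 1) - u (k / M))
    with hv_def
  have hdiff : ∀ q, 0 ≤ u (q + 1) - u q := fun q => sub_nonneg.mpr (hu (Nat.le_succ q))
  have hdiff1 : ∀ q, u (q + 1) - u q ≤ 1 := fun q => by
    have h1 := (hus q).1; have h2 := (hus (q + 1)).2; linarith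
  have hfrac : ∀ k, 0 ≤ ((k % M : ℕ) : ℝ) / M ∧ ((k % M : ℕ) : ℝ) / M ≤ 1 := by
    intro k
    constructor
    · positivity
    · rw [div_le_one hMR]; exact_mod_cast (Nat.mod_lt k hM).le
  have hvlb : ∀ k, u (k / M) ≤ v k := by
    intro k
    have h1 := (hfrac k).1
    have h2 := hdiff (k / M)
    nlinarith [mul_nonneg h1 h2]
  have hvub : ∀ k, v k ≤ u (k / M + 1) := by
    intro k
    have h1 := (hfrac k).1
    have h1' := (hfrac k).2
    have h2 := hdiff (k / M)
    nlinarith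
  have hvmem : ∀ k, v k ∈ Icc (0:ℝ) 1 := fun k =>
    ⟨(hus _).1.trans (hvlb k), (hvub k).trans (hus _).2⟩
  have hstep : ∀ k, v (k + 1) - v k = (u (k / M + 1) - u (k / M)) / M := by
    intro k
    rcases succ_divmod hM k with ⟨h1, h2⟩ | ⟨h1, h2, h3⟩
    · rw [hv_def]
      dsimp only
      rw [h1, h2]
      push_cast
      field_simp
      ring
    · rw [hv_def]
      dsimp only
      rw [h2, h3]
      have hr : ((k % M : ℕ) : ℝ) = (M : ℝ) - 1 := by
        have hx : k % M = M - 1 := by omega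
        rw [hx]
        push_cast [Nat.cast_sub hM]
        ring
      rw [hr]
      push_cast
      field_simp
      ring
  have hvmono : Monotone v := by
    apply monotone_nat_of_le_succ
    intro k
    have h3 : 0 ≤ v (k + 1) - v k := by
      rw [hstep k]
      exact div_nonneg (hdiff (k / M)) hMR.le
    linarith
  have hv0 : v 0 = 0 := by
    rw [hv_def]
    dsimp only
    simp [h00]
  set K := n * M with hK_def
  set e : ℕ → ℝ := fun k => dist (f (v (k + 1))) (f (v k)) with he_def
  have he0 : ∀ k, 0 ≤ e k := fun k => dist_nonneg
  have hem : ∀ k, e k ≤ δ := by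
    intro k
    have h1 : v (k + 1) - v k ≤ 1 / (M:ℝ) := by
      rw [hstep k]
      exact (div_le_div_iff_of_pos_right hMR).mpr (hdiff1 (k / M))
    have hnn : 0 ≤ v (k + 1) - v k := by
      rw [hstep k]
      exact div_nonneg (hdiff (k / M)) hMR.le
    have h2 : dist (v (k + 1)) (v k) < δ₀ := by
      rw [Real.dist_eq, abs_of_nonneg hnn]
      exact h1.trans_lt hmesh
    exact (hmod (v (k + 1)) (hvmem _) (v k) (hvmem _) h2).le
  set s : ℕ → ℝ := fun j => ∑ i ∈ Finset.range j, e i with hs_def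
  have hsnn : ∀ j, 0 ≤ s j := fun j => Finset.sum_nonneg fun i _ => he0 i
  have hsmono : Monotone s := by
    apply monotone_nat_of_le_succ
    intro j
    rw [hs_def]
    dsimp only
    rw [Finset.sum_range_succ]
    have := he0 j
    linarith
  have hchain : ∀ j, bdist D (f (v j)) ≤ d + s j := by
    intro j
    have h := bdist_chain D (fun i => f (v i)) j
    simp only [hv0, h0] at h
    exact h
  -- Step 4: the chain of inequalities
  have hblock : ∀ q, v (q * M) = u q := by
    intro q
    rw [hv_def]
    dsimp only
    rw [Nat.mul_div_cancel _ hM, Nat.mul_mod_left]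
    simp
  have hSK : V - δ ≤ s K := by
    have hb : ∀ q, dist (f (u (q + 1))) (f (u q)) ≤ ∑ k ∈ Finset.Ico (q * M) ((q + 1) * M), e k := by
      intro q
      have hle : q * M ≤ (q + 1) * M := Nat.mul_le_mul_right M (Nat.le_succ q)
      have h := dist_le_Ico_sum_dist (fun i => f (v i)) hle
      rw [← hblock q, ← hblock (q + 1), dist_comm]
      refine h.trans (le_of_eq (Finset.sum_congr rfl fun i _ => ?_))
      exact dist_comm _ _
    calc V - δ ≤ ∑ q ∈ Finset.range n, dist (f (u (q + 1))) (f (u q)) := hS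
      _ ≤ ∑ q ∈ Finset.range n, ∑ k ∈ Finset.Ico (q * M) ((q + 1) * M), e k :=
          Finset.sum_le_sum fun q _ => hb q
      _ = s K := (sum_blocks e M n).symm
  have hlog : Real.log (1 + (V - δ) / (d + δ)) ≤ Real.log (1 + s K / (d + δ)) := by
    apply Real.log_le_log
    · rw [show (1:ℝ) + (V - δ) / (d + δ) = (d + V) / (d + δ) by field_simp; ring]
      exact div_pos (by linarith) (by linarith)
    · have h : (V - δ) / (d + δ) ≤ s K / (d + δ) :=
        (div_le_div_iff_of_pos_right (by linarith)).mpr hSK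
      linarith
  have hkey : ENNReal.ofReal (Real.log (1 + (V - δ) / (d + δ)))
      ≤ ∑ k ∈ Finset.range K, edist (f (v (k + 1))) (f (v k)) /
          max (ENNReal.ofReal (bdist D (f (v k)))) (ENNReal.ofReal (bdist D (f (v (k + 1))))) := by
    have hterm : ∀ k, ENNReal.ofReal (e k / (d + s (k + 1)))
        ≤ edist (f (v (k + 1))) (f (v k)) /
          max (ENNReal.ofReal (bdist D (f (v k)))) (ENNReal.ofReal (bdist D (f (v (k + 1))))) := by
      intro k
      have hden : max (ENNReal.ofReal (bdist D (f (v k)))) (ENNReal.ofReal (bdist D (f (v (k + 1)))))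
          ≤ ENNReal.ofReal (d + s (k + 1)) := by
        apply max_le
        · exact ENNReal.ofReal_le_ofReal ((hchain k).trans (by
            have := hsmono (Nat.le_succ k); linarith))
        · exact ENNReal.ofReal_le_ofReal (hchain (k + 1))
      have hpos : 0 < d + s (k + 1) := by have := hsnn (k + 1); linarith
      calc ENNReal.ofReal (e k / (d + s (k + 1)))
          = ENNReal.ofReal (e k) / ENNReal.ofReal (d + s (k + 1)) :=
            ENNReal.ofReal_div_of_pos hpos
        _ ≤ ENNReal.ofReal (e k) /
            max (ENNReal.ofReal (bdist D (f (v k)))) (ENNReal.ofReal (bdist D (f (v (k + 1))))) :=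
            ENNReal.div_le_div_left hden _
        _ = edist (f (v (k + 1))) (f (v k)) /
            max (ENNReal.ofReal (bdist D (f (v k)))) (ENNReal.ofReal (bdist D (f (v (k + 1))))) := by
            rw [edist_dist]
    calc ENNReal.ofReal (Real.log (1 + (V - δ) / (d + δ)))
        ≤ ENNReal.ofReal (Real.log (1 + s K / (d + δ))) := ENNReal.ofReal_le_ofReal hlog
      _ ≤ ENNReal.ofReal (∑ k ∈ Finset.range K, e k / (d + s (k + 1))) :=
          ENNReal.ofReal_le_ofReal (log_chain d δ hd hδ.le e he0 hem K)
      _ = ∑ k ∈ Finset.range K, ENNReal.ofReal (e k / (d + s (k + 1))) :=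
          ENNReal.ofReal_sum_of_nonneg fun k _ => div_nonneg (he0 k)
            (by have := hsnn (k + 1); linarith)
      _ ≤ _ := Finset.sum_le_sum fun k _ => hterm k
  refine hkey.trans ?_
  rw [qhVariationOn_def]
  exact le_iSup_of_le
    (⟨K, ⟨v, hvmono, hvmem⟩⟩ : ℕ × { w : ℕ → ℝ // Monotone w ∧ ∀ i, w i ∈ Icc (0:ℝ) 1 })
    (le_refl _)


lemma aux_log_le {X : Type*} [MetricSpace X] (D : Set X) (f : ℝ → X) (x : X)
    (hc : ContinuousOn f (Icc 0 1)) (h0 : f 0 = x) (hd : 0 < bdist D x) :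
    ENNReal.ofReal (Real.log (1 + (eVariationOn f (Icc 0 1)).toReal / bdist D x))
      ≤ qhVariationOn D f (Icc 0 1) := by
  set d := bdist D x with hd_def
  set V := (eVariationOn f (Icc 0 1)).toReal with hV_def
  have hV0 : 0 ≤ V := ENNReal.toReal_nonneg
  have htend : Filter.Tendsto (fun δ : ℝ => ENNReal.ofReal (Real.log (1 + (V - δ) / (d + δ))))
      (nhdsWithin 0 (Ioi 0)) (nhds (ENNReal.ofReal (Real.log (1 + V / d)))) := by
    have h1 : ContinuousAt (fun δ : ℝ => 1 + (V - δ) / (d + δ)) 0 :=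
      continuousAt_const.add ((continuousAt_const.sub continuousAt_id).div
        (continuousAt_const.add continuousAt_id) (by simpa using hd.ne'))
    have hne : (1 + V / d) ≠ 0 := by
      have h3 : 0 ≤ V / d := div_nonneg hV0 hd.le
      positivity
    have l1 : Filter.Tendsto (fun δ : ℝ => 1 + (V - δ) / (d + δ)) (nhds 0)
        (nhds (1 + V / d)) := by
      have h2 := h1.tendsto
      simpa using h2
    have l2 := (Real.continuousAt_log hne).tendsto
    have l3 := ENNReal.continuous_ofReal.tendsto (Real.log (1 + V / d))
    exact (l3.comp (l2.comp l1)).mono_left nhdsWithin_le_nhds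
  refine le_of_tendsto htend ?_
  filter_upwards [self_mem_nhdsWithin] with δ hδ
  exact aux_key D f x hc h0 hd hδ

lemma qhVar_reverse_le {X : Type*} [MetricSpace X] (D : Set X) (f : ℝ → X) :
    qhVariationOn D (fun t => f (1 - t)) (Icc 0 1) ≤ qhVariationOn D f (Icc 0 1) := by
  rw [qhVariationOn_def, qhVariationOn_def]
  apply iSup_le
  rintro ⟨n, u, hu, hus⟩
  set u' : ℕ → ℝ := fun i => if i ≤ n then 1 - u (n - i) else 1 with hu'_def
  have hu'mem : ∀ i, u' i ∈ Icc (0:ℝ) 1 := by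
    intro i
    rw [hu'_def]
    dsimp only
    split
    · have h1 := (hus (n - i)).1
      have h2 := (hus (n - i)).2
      exact ⟨by linarith, by linarith⟩
    · exact ⟨zero_le_one, le_refl 1⟩
  have hu'mono : Monotone u' := by
    intro i j hij
    rw [hu'_def]
    dsimp only
    rcases le_or_gt j n with hj | hj
    · rw [if_pos (hij.trans hj), if_pos hj]
      have := hu (show n - j ≤ n - i by omega)
      linarith
    · rw [if_neg (show ¬ j ≤ n by omega)]
      split
      · have h1 := (hus (n - i)).1
        linarith
      · exact le_refl 1
  refine le_trans ?_ (le_iSup_of_le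
    (⟨n, ⟨u', hu'mono, hu'mem⟩⟩ : ℕ × { w : ℕ → ℝ // Monotone w ∧ ∀ i, w i ∈ Icc (0:ℝ) 1 })
    (le_refl _))
  dsimp only
  rw [← Finset.sum_range_reflect (fun j => edist (f (u' (j + 1))) (f (u' j)) /
    max (ENNReal.ofReal (bdist D (f (u' j)))) (ENNReal.ofReal (bdist D (f (u' (j + 1)))))) n]
  apply le_of_eq
  apply Finset.sum_congr rfl
  intro i hi
  rw [Finset.mem_range] at hi
  have e1 : u' (n - 1 - i) = 1 - u (i + 1) := by
    rw [hu'_def]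
    dsimp only
    rw [if_pos (by omega)]
    have hnn : n - (n - 1 - i) = i + 1 := by omega
    rw [hnn]
  have e2 : u' (n - 1 - i + 1) = 1 - u i := by
    rw [hu'_def]
    dsimp only
    rw [if_pos (by omega)]
    have hnn : n - (n - 1 - i + 1) = i := by omega
    rw [hnn]
  rw [e1, e2, edist_comm, max_comm]


end MyAux

/-- For a rectifiable curve `γ` in a noncomplete rectifiably connected
metric space `D` with endpoints `x` and `y`,
`ℓ_k(γ) ≥ log(1 + ℓ(γ) / min(d(x), d(y)))`. -/
theorem quasihyperbolic_length_lower_bound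
    {X : Type*} [MetricSpace X] (D : Set X) (hDo : IsOpen D) (hbd : Dᶜ.Nonempty)
    (hrc : RectifiablyConnected D) (x y : X) (f : ℝ → X)
    (hf : IsCurveIn D f x y) (hrect : eVariationOn f (Icc 0 1) < ⊤) :
    ENNReal.ofReal (Real.log (1 + (eVariationOn f (Icc 0 1)).toReal /
        min (bdist D x) (bdist D y))) ≤ qhVariationOn D f (Icc 0 1) := by
  have hDc : IsClosed Dᶜ := hDo.isClosed_compl
  have hx : x ∈ D := by rw [← hf.source]; exact hf.mem 0 ⟨le_refl 0, zero_le_one⟩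
  have hy : y ∈ D := by rw [← hf.target]; exact hf.mem 1 ⟨zero_le_one, le_refl 1⟩
  have hdx : 0 < bdist D x := (hDc.notMem_iff_infDist_pos hbd).mp (by simpa using hx)
  have hdy : 0 < bdist D y := (hDc.notMem_iff_infDist_pos hbd).mp (by simpa using hy)
  rcases le_total (bdist D x) (bdist D y) with hmin | hmin
  · rw [min_eq_left hmin]
    exact aux_log_le D f x hf.cont hf.source hdx
  · rw [min_eq_right hmin]
    have hgc : ContinuousOn (fun t => f (1 - t)) (Icc 0 1) := by
      apply hf.cont.comp (Continuous.continuousOn (by continuity))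
      intro t ht
      exact ⟨by linarith [ht.2], by linarith [ht.1]⟩
    have hg0 : (fun t => f (1 - t)) 0 = y := by simpa using hf.target
    have hVg : eVariationOn (fun t => f (1 - t)) (Icc 0 1) = eVariationOn f (Icc 0 1) := by
      have hanti : AntitoneOn (fun t : ℝ => 1 - t) (Icc 0 1) := by
        intro a _ b _ hab
        dsimp only
        linarith
      have h1 : eVariationOn (f ∘ fun t : ℝ => 1 - t) (Icc 0 1)
          = eVariationOn f ((fun t : ℝ => 1 - t) '' Icc 0 1) :=
        eVariationOn.comp_eq_of_antitoneOn f _ hanti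
      have h2 : (fun t : ℝ => 1 - t) '' Icc (0:ℝ) 1 = Icc 0 1 := by
        rw [image_const_sub_Icc]
        norm_num
      calc eVariationOn (fun t => f (1 - t)) (Icc 0 1)
          = eVariationOn (f ∘ fun t : ℝ => 1 - t) (Icc 0 1) := rfl
        _ = eVariationOn f ((fun t : ℝ => 1 - t) '' Icc 0 1) := h1
        _ = eVariationOn f (Icc 0 1) := by rw [h2]
    calc ENNReal.ofReal (Real.log (1 + (eVariationOn f (Icc 0 1)).toReal / bdist D y))
        ≤ qhVariationOn D (fun t => f (1 - t)) (Icc 0 1) := by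
          rw [← hVg]
          exact aux_log_le D (fun t => f (1 - t)) y hgc hg0 hdy
      _ ≤ qhVariationOn D f (Icc 0 1) := qhVar_reverse_le D f
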